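/- For r odd, the r-th power of the path v_1...v_{2r} admits an acyclic vertex partition into (r+1)/2 parts given by {v_1,v_2,v_{r+2},v_{r+3}}, {v_3,v_4,v_{r+4},v_{r+5}}, ..., {v_{r−2},v_{r−1},v_{2r−1},v_{2r}}, {v_r,v_{r+1}}; consequently ar(P^r_{2r}) ≤ (r+1)/2. -/
import Mathlib


/-- The `r`-th power of a path on `ℓ` vertices: `v_i ~ v_j` iff `0 < |i - j| ≤ r`. -/
def pathPower (r ℓ : ℕ) : SimpleGraph (Fin ℓ) :=
  SimpleGraph.fromRel (fun i j => |(i : ℤ) - (j : ℤ)| ≤ r)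

/-- Vertex arboricity: least `t` such that the vertices can be partitioned into `t`
parts each inducing a forest. -/
noncomputable def arb {V : Type*} (H : SimpleGraph V) : ℕ :=
  sInf {t : ℕ | ∃ f : V → Fin t, ∀ i : Fin t, (H.induce {v | f v = i}).IsAcyclic}

/-- The explicit part assignment (for `r` odd), using the 1-based index `i = v + 1`:
vertices `v_r, v_{r+1}` go to the last part (index `(r-1)/2`), vertices
`v_1,...,v_{r-1}` are grouped in consecutive pairs `{v_{2j-1}, v_{2j}}` into part
`j - 1`, and vertices `v_{r+2},...,v_{2r}` are grouped in consecutive pairs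
`{v_{r+2j}, v_{r+2j+1}}` into part `j - 1`; this realizes the parts
`{v_1,v_2,v_{r+2},v_{r+3}}, ..., {v_{r-2},v_{r-1},v_{2r-1},v_{2r}}, {v_r,v_{r+1}}`. -/
def oddPart (r : ℕ) (v : Fin (2 * r)) : ℕ :=
  let i := v.val + 1
  if r ≤ i ∧ i ≤ r + 1 then (r - 1) / 2
  else if i < r then (i - 1) / 2
  else (i - r - 2) / 2

open SimpleGraph

instance pgadjdec {n : ℕ} : DecidableRel (pathGraph n).Adj := fun a b =>
  decidable_of_iff (a.val + 1 = b.val ∨ b.val + 1 = a.val) pathGraph_adj.symm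

instance pgdec (e : Sym2 (Fin 4)) : DecidableRel (pathGraph 4 \ fromEdgeSet {e}).Adj := fun a b =>
  decidable_of_iff ((pathGraph 4).Adj a b ∧ ¬(s(a,b) = e ∧ a ≠ b)) (by
    simp only [sdiff_adj, fromEdgeSet_adj, Set.mem_singleton_iff])

lemma pg4_acyclic : (pathGraph 4).IsAcyclic := by
  rw [isAcyclic_iff_forall_adj_isBridge]
  intro v w h
  rw [isBridge_iff]
  revert h
  fin_cases v <;> fin_cases w <;> decide

lemma isAcyclic_of_hom {V W : Type*} {G : SimpleGraph V} {H : SimpleGraph W} (f : G →g H)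
    (hf : Function.Injective f) (h : H.IsAcyclic) : G.IsAcyclic :=
  fun _ p hp => h (p.map f) (hp.map hf)

/-- label within a part -/
def lab (r t n : ℕ) : Fin 4 :=
  if n = 2*t then 0 else if n = 2*t+1 then 1 else if n = 2*t+r+1 then 2 else 3

lemma lab_zero (r t : ℕ) : lab r t (2*t) = 0 := by simp [lab]

lemma lab_one (r t : ℕ) : lab r t (2*t+1) = 1 := by
  unfold lab; rw [if_neg (by omega), if_pos rfl]

lemma lab_two (r t : ℕ) (hr : 1 ≤ r) : lab r t (2*t+r+1) = 2 := by
  unfold lab; rw [if_neg (by omega), if_neg (by omega), if_pos rfl]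

lemma lab_three (r t : ℕ) (hr : 1 ≤ r) : lab r t (2*t+r+2) = 3 := by
  unfold lab; rw [if_neg (by omega), if_neg (by omega), if_neg (by omega)]


/-- For `r` odd, the explicit partition into `(r+1)/2` parts is an acyclic partition of
the `r`-th power of the path on `2r` vertices; consequently `ar(P^r_{2r}) ≤ (r+1)/2`. -/
theorem stmt18 (r : ℕ) (hr : 3 ≤ r) (hro : Odd r) :
    (∀ v : Fin (2 * r), oddPart r v < (r + 1) / 2) ∧
    (∀ t : ℕ, ((pathPower r (2 * r)).induce {v | oddPart r v = t}).IsAcyclic) ∧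
    arb (pathPower r (2 * r)) ≤ (r + 1) / 2 := by
  obtain ⟨k, hk⟩ := hro
  have hr1 : 1 ≤ r := by omega
  have part1 : ∀ v : Fin (2 * r), oddPart r v < (r + 1) / 2 := by
    intro v
    have hv := v.isLt
    simp only [oddPart]
    split_ifs <;> omega
  have part2 : ∀ t : ℕ, ((pathPower r (2 * r)).induce {v | oddPart r v = t}).IsAcyclic := by
    intro t
    set S : Set (Fin (2*r)) := {v | oddPart r v = t} with hS
    have hmem : ∀ v : Fin (2*r), v ∈ S →
        v.val = 2*t ∨ v.val = 2*t+1 ∨ v.val = 2*t+r+1 ∨ v.val = 2*t+r+2 := by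
      intro v hv
      have hlt := v.isLt
      simp only [hS, Set.mem_setOf_eq, oddPart] at hv
      split_ifs at hv <;> omega
    have hadj : ∀ a b : ↥S, ((pathPower r (2*r)).induce S).Adj a b →
        (pathGraph 4).Adj (lab r t a.1.val) (lab r t b.1.val) := by
      intro a b hab
      obtain ⟨hne, hle⟩ := hab
      have hle' : |((a.1.val : ℤ)) - (b.1.val : ℤ)| ≤ r := by
        rcases hle with h | h
        · exact h
        · rw [abs_sub_comm]; exact h
      rw [abs_sub_le_iff] at hle'
      have hne' : a.1.val ≠ b.1.val := fun h => hne (Fin.ext h)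
      rcases hmem a.1 a.2 with ha|ha|ha|ha <;> rcases hmem b.1 b.2 with hb|hb|hb|hb <;>
        first
        | (exfalso; omega)
        | (rw [ha, hb, lab_zero, lab_one, pathGraph_adj]; decide)
        | (rw [ha, hb, lab_one, lab_zero, pathGraph_adj]; decide)
        | (rw [ha, hb, lab_one, lab_two r t hr1, pathGraph_adj]; decide)
        | (rw [ha, hb, lab_two r t hr1, lab_one, pathGraph_adj]; decide)
        | (rw [ha, hb, lab_two r t hr1, lab_three r t hr1, pathGraph_adj]; decide)
        | (rw [ha, hb, lab_three r t hr1, lab_two r t hr1, pathGraph_adj]; decide)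
    have hinj : Function.Injective (fun a : ↥S => lab r t a.1.val) := by
      intro a b h
      simp only at h
      rcases hmem a.1 a.2 with ha|ha|ha|ha <;> rcases hmem b.1 b.2 with hb|hb|hb|hb <;>
        first
        | (exact Subtype.ext (Fin.ext (by omega)))
        | (exfalso;
           rw [ha, hb] at h;
           simp only [lab_zero, lab_one, lab_two r t hr1, lab_three r t hr1] at h;
           exact absurd h (by decide))
    exact isAcyclic_of_hom ⟨fun a => lab r t a.1.val, fun hab => hadj _ _ hab⟩ hinj pg4_acyclic
  refine ⟨part1, part2, ?_⟩
  · -- arb bound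
    apply Nat.sInf_le
    refine ⟨fun v => ⟨oddPart r v, part1 v⟩, fun i => ?_⟩
    have hset : {v : Fin (2*r) | (⟨oddPart r v, part1 v⟩ : Fin ((r+1)/2)) = i}
        = {v : Fin (2*r) | oddPart r v = i.val} := by
      ext v
      simp [Fin.ext_iff]
    rw [hset]
    exact part2 i.val
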